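/- One-step progress independent of the negative curvature: let f : E → ℝ be twice continuously differentiable with L-Lipschitz-continuous Hessian (L > 0). Fix x ∈ E, suppose ∇²f(x) = A₊ − A₋ with A₊, A₋ symmetric positive semidefinite, let H be symmetric positive semidefinite with ‖A₊ − H‖ ≤ β for some β ≥ 0, let P be an orthogonal projection with H∘P = H and ‖(H − ∇²f(x))∘P‖ ≤ η, where η ≥ β and η > 0, and let x⁺ satisfy ∇f(x) + (H + αI)(x⁺ − x) = 0 with α = (L/2)·‖x⁺ − x‖ + η. Define y⁺ := x + P(x⁺ − x). Then f(x) − f(x⁺) ≥ min{ ‖∇f(y⁺)‖^{3/2}/(6√(2L)), ‖∇f(y⁺)‖²/(32η) }. -/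

import Mathlib

open scoped RealInnerProductSpace
open Real Set

def IsSymmPSD {n : ℕ} (H : EuclideanSpace ℝ (Fin n) →L[ℝ] EuclideanSpace ℝ (Fin n)) : Prop :=
  (∀ u v, ⟪H u, v⟫ = ⟪u, H v⟫) ∧ ∀ u, 0 ≤ ⟪H u, u⟫

noncomputable def hess {n : ℕ} (f : EuclideanSpace ℝ (Fin n) → ℝ)
    (x : EuclideanSpace ℝ (Fin n)) :
    EuclideanSpace ℝ (Fin n) →L[ℝ] EuclideanSpace ℝ (Fin n) :=
  fderiv ℝ (gradient f) x

set_option synthInstance.maxHeartbeats 1000000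
set_option maxHeartbeats 1000000

lemma grad_cd {n : ℕ} (f : EuclideanSpace ℝ (Fin n) → ℝ) (hf : ContDiff ℝ 2 f) :
    ContDiff ℝ 1 (gradient f) := by
  have h1 : ContDiff ℝ 1 (fderiv ℝ f) := hf.fderiv_right (by norm_num)
  exact ((InnerProductSpace.toDual ℝ (EuclideanSpace ℝ (Fin n))).symm.contDiff).comp h1

lemma hess_cont {n : ℕ} (f : EuclideanSpace ℝ (Fin n) → ℝ)
    (L : ℝ) (hL : 0 < L) (hLip : ∀ x y, ‖hess f x - hess f y‖ ≤ L * ‖x - y‖) :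
    Continuous (hess f) := by
  have : LipschitzWith (Real.toNNReal L) (hess f) := by
    apply LipschitzWith.of_dist_le_mul
    intro a b
    simpa [dist_eq_norm, Real.coe_toNNReal L hL.le] using hLip a b
  exact this.continuous

lemma grad_taylor {n : ℕ} (f : EuclideanSpace ℝ (Fin n) → ℝ) (hf : ContDiff ℝ 2 f)
    (L : ℝ) (hL : 0 < L) (hLip : ∀ x y, ‖hess f x - hess f y‖ ≤ L * ‖x - y‖)
    (x v : EuclideanSpace ℝ (Fin n)) :
    ‖gradient f (x + v) - gradient f x - hess f x v‖ ≤ L / 2 * ‖v‖ ^ 2 := by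
  have hg : ContDiff ℝ 1 (gradient f) := grad_cd f hf
  have hgd : ∀ p, HasFDerivAt (gradient f) (hess f p) p :=
    fun p => (hg.differentiable (by norm_num) p).hasFDerivAt
  have hc : ∀ τ : ℝ, HasDerivAt (fun τ : ℝ => x + τ • v) v τ := fun τ => by
    simpa using ((hasDerivAt_id τ).smul_const v).const_add x
  have hder : ∀ τ : ℝ, HasDerivAt (fun τ : ℝ => gradient f (x + τ • v))
      (hess f (x + τ • v) v) τ := fun τ => (hgd _).comp_hasDerivAt τ (hc τ)
  have hcont : Continuous fun τ : ℝ => hess f (x + τ • v) v :=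
    ((hess_cont f L hL hLip).comp (continuous_const.add (continuous_id.smul continuous_const))).clm_apply continuous_const
  have hint : IntervalIntegrable (fun τ : ℝ => hess f (x + τ • v) v)
      MeasureTheory.volume 0 1 := hcont.intervalIntegrable _ _
  have hFTC : ∫ τ in (0:ℝ)..1, hess f (x + τ • v) v = gradient f (x + v) - gradient f x := by
    have := intervalIntegral.integral_eq_sub_of_hasDerivAt (fun τ _ => hder τ) hint
    simpa using this
  have heq : gradient f (x + v) - gradient f x - hess f x v
      = ∫ τ in (0:ℝ)..1, (hess f (x + τ • v) v - hess f x v) := by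
    rw [intervalIntegral.integral_sub hint intervalIntegrable_const, hFTC]
    simp
  rw [heq]
  have hbound : ∀ τ ∈ Set.Icc (0:ℝ) 1,
      ‖hess f (x + τ • v) v - hess f x v‖ ≤ (L * ‖v‖ ^ 2) * τ := by
    intro τ hτ
    have h1 : hess f (x + τ • v) v - hess f x v = (hess f (x + τ • v) - hess f x) v := by
      simp
    rw [h1]
    calc ‖(hess f (x + τ • v) - hess f x) v‖
        ≤ ‖hess f (x + τ • v) - hess f x‖ * ‖v‖ :=
          ContinuousLinearMap.le_opNorm _ v
      _ ≤ (L * ‖x + τ • v - x‖) * ‖v‖ :=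
          mul_le_mul_of_nonneg_right (hLip _ _) (norm_nonneg v)
      _ = (L * ‖v‖ ^ 2) * τ := by
          simp [norm_smul, abs_of_nonneg hτ.1]; ring
  calc ‖∫ τ in (0:ℝ)..1, (hess f (x + τ • v) v - hess f x v)‖
      ≤ ∫ τ in (0:ℝ)..1, ‖hess f (x + τ • v) v - hess f x v‖ :=
        intervalIntegral.norm_integral_le_integral_norm (by norm_num)
    _ ≤ ∫ τ in (0:ℝ)..1, (L * ‖v‖ ^ 2) * τ := by
        apply intervalIntegral.integral_mono_on (by norm_num)
        · exact (hcont.sub continuous_const).norm.intervalIntegrable _ _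
        · exact (continuous_const.mul continuous_id : Continuous fun τ : ℝ => (L * ‖v‖ ^ 2) * τ).intervalIntegrable _ _
        · exact hbound
    _ = L / 2 * ‖v‖ ^ 2 := by
        rw [intervalIntegral.integral_const_mul, integral_id]; ring

lemma f_taylor {n : ℕ} (f : EuclideanSpace ℝ (Fin n) → ℝ) (hf : ContDiff ℝ 2 f)
    (L : ℝ) (hL : 0 < L) (hLip : ∀ x y, ‖hess f x - hess f y‖ ≤ L * ‖x - y‖)
    (x v : EuclideanSpace ℝ (Fin n)) :
    f (x + v) - f x ≤ ⟪gradient f x, v⟫ + 1/2 * ⟪hess f x v, v⟫ + L/6 * ‖v‖ ^ 3 := by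
  have hg : ContDiff ℝ 1 (gradient f) := grad_cd f hf
  have hgcont : Continuous (gradient f) := hg.continuous
  have hc : ∀ τ : ℝ, HasDerivAt (fun τ : ℝ => x + τ • v) v τ := fun τ => by
    simpa using ((hasDerivAt_id τ).smul_const v).const_add x
  have hfd : ∀ τ : ℝ, HasDerivAt (fun τ : ℝ => f (x + τ • v))
      ⟪gradient f (x + τ • v), v⟫ τ := by
    intro τ
    have h1 := ((hf.differentiable (by norm_num) (x + τ • v)).hasFDerivAt).comp_hasDerivAt
      τ (hc τ)
    have h2 : ⟪gradient f (x + τ • v), v⟫ = fderiv ℝ f (x + τ • v) v := by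
      unfold gradient
      exact InnerProductSpace.toDual_symm_apply
    rw [h2]; exact h1
  have hcont : Continuous fun τ : ℝ => ⟪gradient f (x + τ • v), v⟫ :=
    (hgcont.comp (continuous_const.add (continuous_id.smul continuous_const))).inner
      continuous_const
  have hint : IntervalIntegrable (fun τ : ℝ => ⟪gradient f (x + τ • v), v⟫)
      MeasureTheory.volume 0 1 := hcont.intervalIntegrable _ _
  have hFTC : ∫ τ in (0:ℝ)..1, ⟪gradient f (x + τ • v), v⟫ = f (x + v) - f x := by
    have := intervalIntegral.integral_eq_sub_of_hasDerivAt (fun τ _ => hfd τ) hint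
    simpa using this
  rw [← hFTC]
  have hbound : ∀ τ ∈ Set.Icc (0:ℝ) 1,
      ⟪gradient f (x + τ • v), v⟫
        ≤ ⟪gradient f x, v⟫ + ⟪hess f x v, v⟫ * τ + (L/2 * ‖v‖ ^ 3) * τ ^ 2 := by
    intro τ hτ
    have key := grad_taylor f hf L hL hLip x (τ • v)
    have hid : ⟪gradient f (x + τ • v), v⟫
        = ⟪gradient f x, v⟫ + ⟪hess f x v, v⟫ * τ
          + ⟪gradient f (x + τ • v) - gradient f x - hess f x (τ • v), v⟫ := by
      simp only [inner_sub_left, map_smul, real_inner_smul_left]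
      ring
    rw [hid]
    have h3 : ⟪gradient f (x + τ • v) - gradient f x - hess f x (τ • v), v⟫
        ≤ (L/2 * ‖v‖ ^ 3) * τ ^ 2 := by
      calc ⟪gradient f (x + τ • v) - gradient f x - hess f x (τ • v), v⟫
          ≤ ‖gradient f (x + τ • v) - gradient f x - hess f x (τ • v)‖ * ‖v‖ :=
            real_inner_le_norm _ _
        _ ≤ (L / 2 * ‖τ • v‖ ^ 2) * ‖v‖ :=
            mul_le_mul_of_nonneg_right key (norm_nonneg v)
        _ = (L/2 * ‖v‖ ^ 3) * τ ^ 2 := by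
            simp [norm_smul, mul_pow, sq_abs]; ring
    linarith
  have hmono := intervalIntegral.integral_mono_on (by norm_num : (0:ℝ) ≤ 1) hint
    (((by fun_prop) : Continuous fun τ : ℝ => ⟪gradient f x, v⟫
      + ⟪hess f x v, v⟫ * τ + (L/2 * ‖v‖ ^ 3) * τ ^ 2).intervalIntegrable _ _) hbound
  have hval : ∫ τ in (0:ℝ)..1,
      (⟪gradient f x, v⟫ + ⟪hess f x v, v⟫ * τ + (L/2 * ‖v‖ ^ 3) * τ ^ 2)
      = ⟪gradient f x, v⟫ + 1/2 * ⟪hess f x v, v⟫ + L/6 * ‖v‖ ^ 3 := by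
    rw [intervalIntegral.integral_add (intervalIntegrable_const.add
        (((by fun_prop) : Continuous fun τ : ℝ => ⟪hess f x v, v⟫ * τ).intervalIntegrable _ _))
        (((by fun_prop) : Continuous fun τ : ℝ => (L/2 * ‖v‖ ^ 3) * τ ^ 2).intervalIntegrable _ _),
      intervalIntegral.integral_add intervalIntegrable_const
        (((by fun_prop) : Continuous fun τ : ℝ => ⟪hess f x v, v⟫ * τ).intervalIntegrable _ _),
      intervalIntegral.integral_const, intervalIntegral.integral_const_mul,
      intervalIntegral.integral_const_mul, integral_id, integral_pow]
    simp only [smul_eq_mul]; push_cast; ring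
  rw [hval] at hmono
  exact hmono

/-- One-step progress independent of the negative curvature:
`f(x) − f(x⁺) ≥ min{ ‖∇f(y⁺)‖^{3/2}/(6√(2L)), ‖∇f(y⁺)‖²/(32η) }`. -/
theorem one_step_progress_cut_negative_spectrum {n : ℕ}
    (f : EuclideanSpace ℝ (Fin n) → ℝ) (hf : ContDiff ℝ 2 f)
    (L : ℝ) (hL : 0 < L)
    (hLip : ∀ x y, ‖hess f x - hess f y‖ ≤ L * ‖x - y‖)
    (x xp : EuclideanSpace ℝ (Fin n))
    (Ap Am H P : EuclideanSpace ℝ (Fin n) →L[ℝ] EuclideanSpace ℝ (Fin n))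
    (hAp : IsSymmPSD Ap) (hAm : IsSymmPSD Am)
    (hdecomp : hess f x = Ap - Am)
    (hH : IsSymmPSD H)
    (β : ℝ) (hβ : 0 ≤ β) (hHerr : ‖Ap - H‖ ≤ β)
    (hPsym : ∀ u v, ⟪P u, v⟫ = ⟪u, P v⟫) (hPidem : P.comp P = P)
    (hHP : H.comp P = H)
    (η : ℝ) (hηβ : β ≤ η) (hηpos : 0 < η)
    (hHPerr : ‖(H - hess f x).comp P‖ ≤ η)
    (α : ℝ) (hα : α = L / 2 * ‖xp - x‖ + η)
    (hstep : gradient f x + H (xp - x) + α • (xp - x) = 0)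
    (yp : EuclideanSpace ℝ (Fin n)) (hyp : yp = x + P (xp - x)) :
    min (‖gradient f yp‖ ^ ((3 : ℝ) / 2) / (6 * Real.sqrt (2 * L)))
        (‖gradient f yp‖ ^ 2 / (32 * η)) ≤ f x - f xp := by
  set s := xp - x with hs
  have hxps : xp = x + s := by simp [hs]
  set t := ‖s‖ with ht
  have ht0 : 0 ≤ t := norm_nonneg s
  have hα' : α = L / 2 * t + η := hα
  have hα0 : 0 ≤ α := by nlinarith
  -- gradient at x
  have hgx : gradient f x = -(H s) - α • s := by
    have h0 : gradient f x + (H s + α • s) = 0 := by rw [← add_assoc]; exact hstep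
    have h1 := eq_neg_of_add_eq_zero_left h0
    rw [h1]; abel
  -- descent
  have hdesc := f_taylor f hf L hL hLip x s
  rw [← hxps] at hdesc
  have hHs : ⟪gradient f x, s⟫ = -⟪H s, s⟫ - α * t ^ 2 := by
    rw [hgx]
    simp only [inner_sub_left, inner_neg_left, real_inner_smul_left,
      real_inner_self_eq_norm_sq]
    rfl
  have hhb : ⟪hess f x s, s⟫ ≤ ⟪H s, s⟫ + β * t ^ 2 := by
    have h1 : ⟪hess f x s, s⟫ = ⟪Ap s, s⟫ - ⟪Am s, s⟫ := by
      rw [hdecomp]; simp [inner_sub_left]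
    have h2 : 0 ≤ ⟪Am s, s⟫ := hAm.2 s
    have h3 : ⟪Ap s, s⟫ - ⟪H s, s⟫ ≤ β * t ^ 2 := by
      have h4 : ⟪Ap s, s⟫ - ⟪H s, s⟫ = ⟪(Ap - H) s, s⟫ := by simp [inner_sub_left]
      rw [h4]
      calc ⟪(Ap - H) s, s⟫ ≤ ‖(Ap - H) s‖ * ‖s‖ := real_inner_le_norm _ _
        _ ≤ (‖Ap - H‖ * ‖s‖) * ‖s‖ :=
            mul_le_mul_of_nonneg_right ((Ap - H).le_opNorm s) (norm_nonneg _)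
        _ ≤ β * t ^ 2 := by nlinarith [norm_nonneg s]
    linarith
  have hHpsd : 0 ≤ ⟪H s, s⟫ := hH.2 s
  have hD : L / 3 * t ^ 3 + η / 2 * t ^ 2 ≤ f x - f xp := by
    rw [hHs] at hdesc
    nlinarith [hdesc, hhb, hHpsd, ht0]
  -- gradient bound at yp
  set Ps := P s with hPs
  have hPle : ‖Ps‖ ≤ t := by
    have hPP : P Ps = Ps := by rw [hPs, ← ContinuousLinearMap.comp_apply, hPidem]
    have h1 : ‖Ps‖ ^ 2 = ⟪s, Ps⟫ := by
      rw [← real_inner_self_eq_norm_sq, hPsym s Ps, hPP]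
    have h2 : ⟪s, Ps⟫ ≤ ‖s‖ * ‖Ps‖ := real_inner_le_norm _ _
    nlinarith [norm_nonneg Ps, norm_nonneg s]
  have hkey := grad_taylor f hf L hL hLip x Ps
  rw [← hyp] at hkey
  have hgyp : gradient f yp = (gradient f yp - gradient f x - hess f x Ps)
      + ((hess f x - H).comp P) s + -(α • s) := by
    have hHPs : H Ps = H s := by rw [hPs, ← ContinuousLinearMap.comp_apply, hHP]
    have h5 : ((hess f x - H).comp P) s = hess f x Ps - H Ps := by simp [hPs]
    rw [h5, hgx, hHPs]
    abel
  have hcomp : ‖((hess f x - H).comp P) s‖ ≤ η * t := by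
    have h6 : (hess f x - H).comp P = -((H - hess f x).comp P) := by
      ext u; simp
    calc ‖((hess f x - H).comp P) s‖ ≤ ‖(hess f x - H).comp P‖ * t :=
          ((hess f x - H).comp P).le_opNorm s
      _ ≤ η * t := by
          rw [h6, norm_neg]
          exact mul_le_mul_of_nonneg_right hHPerr ht0
  have hnorm : ‖gradient f yp‖ ≤ L * t ^ 2 + 2 * η * t := by
    have h7 : ‖gradient f yp‖ ≤ ‖gradient f yp - gradient f x - hess f x Ps‖
        + ‖((hess f x - H).comp P) s‖ + ‖-(α • s)‖ := by
      nth_rewrite 1 [hgyp]; exact norm_add₃_le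
    have h8 : ‖gradient f yp - gradient f x - hess f x Ps‖ ≤ L / 2 * t ^ 2 := by
      refine hkey.trans ?_
      have := mul_le_mul_of_nonneg_left (pow_le_pow_left₀ (norm_nonneg Ps) hPle 2)
        (by positivity : (0:ℝ) ≤ L / 2)
      linarith
    have h9 : ‖-(α • s)‖ = α * t := by
      rw [norm_neg, norm_smul]; simp [abs_of_nonneg hα0]; exact Or.inl rfl
    nlinarith [h7, h8, hcomp, h9]
  -- final case split
  have hg0 : 0 ≤ ‖gradient f yp‖ := norm_nonneg _
  set g := ‖gradient f yp‖ with hgdef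
  rcases le_or_gt (g / 2) (L * t ^ 2) with hcase | hcase
  · refine le_trans (min_le_left _ _) ?_
    set r := Real.sqrt g with hr
    have hr0 : 0 ≤ r := Real.sqrt_nonneg g
    have hr2 : r ^ 2 = g := Real.sq_sqrt hg0
    have hgpow : g ^ ((3:ℝ)/2) = r ^ 3 := by
      rw [show ((3:ℝ)/2) = (1/2) * 3 by ring, Real.rpow_mul hg0, ← Real.sqrt_eq_rpow,
        show (3:ℝ) = ((3:ℕ):ℝ) by norm_num, Real.rpow_natCast]
    rw [hgpow]
    set u := Real.sqrt (2 * L) with hu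
    have hu0 : 0 < u := Real.sqrt_pos.mpr (by linarith)
    have hu2 : u ^ 2 = 2 * L := Real.sq_sqrt (by linarith)
    rw [div_le_iff₀ (by positivity)]
    have hrt : r ≤ u * t := by
      have h10 : g ≤ (u * t) ^ 2 := by nlinarith
      calc r = Real.sqrt g := hr
        _ ≤ Real.sqrt ((u * t) ^ 2) := Real.sqrt_le_sqrt h10
        _ = u * t := Real.sqrt_sq (by positivity)
    have hr3 : r ^ 3 ≤ (u * t) ^ 3 := pow_le_pow_left₀ hr0 hrt 3
    have hLD : L / 3 * t ^ 3 ≤ f x - f xp := by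
      have hpos : 0 ≤ η / 2 * t ^ 2 := by positivity
      linarith
    have hu3 : u ^ 3 = 2 * L * u := by linear_combination u * hu2
    calc r ^ 3 ≤ (u * t) ^ 3 := hr3
      _ = 6 * u * (L / 3 * t ^ 3) := by rw [mul_pow, hu3]; ring
      _ ≤ 6 * u * (f x - f xp) := mul_le_mul_of_nonneg_left hLD (by positivity)
      _ = (f x - f xp) * (6 * u) := by ring
  · refine le_trans (min_le_right _ _) ?_
    have hgt : g ≤ 4 * η * t := by linarith
    have hη2 : η / 2 * t ^ 2 ≤ f x - f xp := by
      have hpos : 0 ≤ L / 3 * t ^ 3 := by positivity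
      linarith
    rw [div_le_iff₀ (by positivity)]
    nlinarith [hgt, hg0, hη2, hηpos, ht0, sq_nonneg (g - 4 * η * t)]
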